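/- For any prime p and any positive integer m, the binomial coefficient C(p^m, 2p^{m-1}) times C(2p^{m-1}, p^{m-1}) has p-adic valuation exactly 1, where p is an odd prime. -/

import Mathlib

lemma sum_digits_mul_pow (p d j : ℕ) (hp : 1 < p) (hd : d ≠ 0) (hdp : d < p) :
    (p.digits (d * p ^ j)).sum = d := by
  rw [mul_comm, Nat.digits_base_pow_mul hp (Nat.pos_of_ne_zero hd),
    Nat.digits_of_lt p d hd hdp]
  simp

theorem stmt_17 (p : ℕ) (hp : p.Prime) (hodd : p ≠ 2) (m : ℕ) (hm : 1 ≤ m) :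
    padicValNat p (Nat.choose (p^m) (2*p^(m-1)) * Nat.choose (2*p^(m-1)) (p^(m-1))) = 1 := by
  haveI : Fact p.Prime := ⟨hp⟩
  have hp1 : 1 < p := hp.one_lt
  have hp3 : 3 ≤ p := by
    have := hp.two_le
    omega
  have hk : (0:ℕ) < p ^ (m-1) := Nat.pow_pos (by omega)
  have hle : 2 * p ^ (m-1) ≤ p ^ m := by
    calc 2 * p ^ (m-1) ≤ p * p ^ (m-1) := by
          exact Nat.mul_le_mul_right _ (by omega)
      _ = p ^ m := by
          rw [← pow_succ']
          congr 1
          omega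
  have hsub : p ^ m - 2 * p ^ (m-1) = (p - 2) * p ^ (m-1) := by
    have : p ^ m = p * p ^ (m-1) := by
      rw [← pow_succ']; congr 1; omega
    rw [this, Nat.sub_mul]
  have hS1 : (p.digits (p ^ (m-1))).sum = 1 := by
    simpa using sum_digits_mul_pow p 1 (m-1) hp1 one_ne_zero hp1
  have hS2 : (p.digits (2 * p ^ (m-1))).sum = 2 :=
    sum_digits_mul_pow p 2 (m-1) hp1 two_ne_zero (by omega)
  have hSn : (p.digits (p ^ m)).sum = 1 := by
    simpa using sum_digits_mul_pow p 1 m hp1 one_ne_zero hp1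
  have hSp2 : (p.digits ((p - 2) * p ^ (m-1))).sum = p - 2 :=
    sum_digits_mul_pow p (p - 2) (m-1) hp1 (by omega) (by omega)
  have hA : (p - 1) * padicValNat p (Nat.choose (p^m) (2*p^(m-1))) = p - 1 := by
    rw [sub_one_mul_padicValNat_choose_eq_sub_sum_digits hle, hS2, hSn, hsub, hSp2]
    omega
  have hB : (p - 1) * padicValNat p (Nat.choose (2*p^(m-1)) (p^(m-1))) = 0 := by
    rw [sub_one_mul_padicValNat_choose_eq_sub_sum_digits (by omega), hS1, hS2]
    have : 2 * p ^ (m-1) - p ^ (m-1) = p ^ (m-1) := by omega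
    rw [this, hS1]
  have hA' : padicValNat p (Nat.choose (p^m) (2*p^(m-1))) = 1 := by
    have := hA; nlinarith [Nat.sub_pos_of_lt hp1]
  have hB' : padicValNat p (Nat.choose (2*p^(m-1)) (p^(m-1))) = 0 := by
    have hpm : 0 < p - 1 := by omega
    exact Nat.mul_eq_zero.mp hB |>.resolve_left (by omega)
  rw [padicValNat.mul (Nat.choose_pos hle).ne' (Nat.choose_pos (by omega)).ne', hA', hB']
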